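/- Let K be a δ-hyperbolic graph (geodesic metric space on its realization), and let [x,y] and [x,z] be geodesic segments with Ang_x([x,y],[x,z]) ≥ 50δ. Then the concatenation of the two segments is a geodesic from y to z; moreover every geodesic segment [y,z] passes through x, and the angle of [y,z] at x is at least Ang_x([x,y],[x,z]) − 50δ. -/

import Mathlib

/-- The angle at `v` between edges `(v,v1)` and `(v,v2)`: the length of a shortest
path from `v1` to `v2` avoiding the vertex `v` (`⊤` if there is none). -/
noncomputable def ang {V : Type*} (G : SimpleGraph V) (v v1 v2 : V) : ℕ∞ :=
  ⨅ (p : G.Walk v1 v2) (_ : v ∉ p.support), (p.length : ℕ∞)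

/-- A graph is `δ`-hyperbolic: geodesic triangles are `δ`-thin, i.e. every vertex of one
side is within distance `δ` of the union of the other two sides. -/
def HypGraph {V : Type*} (G : SimpleGraph V) (δ : ℕ) : Prop :=
  ∀ {x y z : V} (p : G.Walk x y) (q : G.Walk y z) (r : G.Walk x z),
    p.length = G.dist x y → q.length = G.dist y z → r.length = G.dist x z →
    ∀ w ∈ r.support, ∃ u, (u ∈ p.support ∨ u ∈ q.support) ∧ G.dist w u ≤ δ


namespace SimpleGraph.Walk
variable {V : Type*} {G : SimpleGraph V}

/-- Initial segment of a walk, by index. -/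
def takeW : {u v : V} → (p : G.Walk u v) → (i : ℕ) → G.Walk u (p.getVert i)
  | _, _, .nil, _ => .nil
  | _, _, .cons _ _, 0 => .nil
  | _, _, .cons h q, (i+1) => .cons h (q.takeW i)

/-- Final segment of a walk, by index. -/
def dropW : {u v : V} → (p : G.Walk u v) → (i : ℕ) → G.Walk (p.getVert i) v
  | _, _, .nil, _ => .nil
  | _, _, .cons h q, 0 => .cons h q
  | _, _, .cons _ q, (i+1) => q.dropW i

variable {u v : V}

@[simp] lemma length_takeW (p : G.Walk u v) (i : ℕ) :
    (p.takeW i).length = min i p.length := by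
  induction p generalizing i with
  | nil => simp [takeW]
  | cons h q ih =>
    cases i with
    | zero => simp [takeW]; rfl
    | succ i => simp [takeW, ih]

@[simp] lemma length_dropW (p : G.Walk u v) (i : ℕ) :
    (p.dropW i).length = p.length - i := by
  induction p generalizing i with
  | nil => simp [dropW]
  | cons h q ih =>
    cases i with
    | zero => simp [dropW]; rfl
    | succ i => simp [dropW, ih]

lemma getVert_takeW (p : G.Walk u v) (i j : ℕ) :
    (p.takeW i).getVert j = p.getVert (min j i) := by
  induction p generalizing i j with
  | nil => rfl
  | cons h q ih =>
    cases i with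
    | zero => cases j <;> rfl
    | succ i =>
      cases j with
      | zero => rfl
      | succ j => simpa [takeW, Nat.succ_min_succ] using ih i j

lemma getVert_dropW (p : G.Walk u v) (i j : ℕ) :
    (p.dropW i).getVert j = p.getVert (i + j) := by
  induction p generalizing i j with
  | nil => rfl
  | cons h q ih =>
    cases i with
    | zero => simp [dropW]; rfl
    | succ i => simpa [dropW, Nat.succ_add] using ih i j

lemma mem_support_takeW {w : V} {p : G.Walk u v} {i : ℕ} (hw : w ∈ (p.takeW i).support) :
    ∃ j, j ≤ i ∧ j ≤ p.length ∧ w = p.getVert j := by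
  obtain ⟨n, hn, hn'⟩ := mem_support_iff_exists_getVert.mp hw
  rw [getVert_takeW] at hn
  rw [length_takeW] at hn'
  exact ⟨min n i, by omega, by omega, hn.symm⟩

lemma mem_support_dropW {w : V} {p : G.Walk u v} {i : ℕ} (hw : w ∈ (p.dropW i).support) :
    ∃ j, i ≤ j ∧ w = p.getVert j := by
  obtain ⟨n, hn, _⟩ := mem_support_iff_exists_getVert.mp hw
  rw [getVert_dropW] at hn
  exact ⟨i + n, by omega, hn.symm⟩

end SimpleGraph.Walk

namespace SimpleGraph
variable {V : Type*} {G : SimpleGraph V} {u v w : V}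

lemma dist_triangle' (h1 : G.Reachable u v) (h2 : G.Reachable v w) :
    G.dist u w ≤ G.dist u v + G.dist v w := by
  obtain ⟨p, hp⟩ := h1.exists_walk_length_eq_dist
  obtain ⟨q, hq⟩ := h2.exists_walk_length_eq_dist
  calc G.dist u w ≤ (p.append q).length := dist_le _
    _ = G.dist u v + G.dist v w := by rw [Walk.length_append, hp, hq]

/-- distance from the start/end to the `i`-th vertex of a geodesic. -/
lemma Walk.dist_getVert (p : G.Walk u v) (hp : p.length = G.dist u v) {i : ℕ}
    (hi : i ≤ p.length) :
    G.dist u (p.getVert i) = i ∧ G.dist (p.getVert i) v = p.length - i := by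
  have h1 : G.dist u (p.getVert i) ≤ i := by
    have := dist_le (p.takeW i)
    rwa [Walk.length_takeW, min_eq_left hi] at this
  have h2 : G.dist (p.getVert i) v ≤ p.length - i := by
    have := dist_le (p.dropW i)
    rwa [Walk.length_dropW] at this
  have h3 : G.dist u v ≤ G.dist u (p.getVert i) + G.dist (p.getVert i) v :=
    dist_triangle' (p.takeW i).reachable (p.dropW i).reachable
  omega

/-- Vertices of a walk are within the walk's length of its start. -/
lemma Walk.dist_start_le {p : G.Walk u v} (hw : w ∈ p.support) :
    G.dist u w ≤ p.length := by
  obtain ⟨n, hn, hn'⟩ := Walk.mem_support_iff_exists_getVert.mp hw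
  subst hn
  have := dist_le (p.takeW n)
  rw [Walk.length_takeW, min_eq_left hn'] at this
  omega

end SimpleGraph

namespace SimpleGraph
variable {V : Type*} {G : SimpleGraph V}

lemma reachable_of_mem_support {u v w : V} {p : G.Walk u v} (hw : w ∈ p.support) :
    G.Reachable u w := by
  obtain ⟨n, hn, -⟩ := Walk.mem_support_iff_exists_getVert.mp hw
  exact hn ▸ (p.takeW n).reachable

/-- An initial segment of a geodesic, starting from the vertex at index 1,
avoids the start vertex. -/
lemma seg₁ {x y : V} (p : G.Walk x y) (hp : p.length = G.dist x y) {t : ℕ}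
    (h1 : 1 ≤ t) (ht : t ≤ p.length) :
    ∃ W : G.Walk (p.getVert 1) (p.getVert t), x ∉ W.support ∧ W.length = t - 1 := by
  have he : (p.takeW t).getVert 1 = p.getVert 1 := by
    rw [Walk.getVert_takeW]; congr 1; omega
  refine ⟨((p.takeW t).dropW 1).copy he rfl, ?_, ?_⟩
  · intro hx
    rw [Walk.support_copy] at hx
    obtain ⟨j, hj1, hj⟩ := Walk.mem_support_dropW hx
    rw [Walk.getVert_takeW] at hj
    have hmin : 1 ≤ min j t ∧ min j t ≤ p.length := by omega
    have := (p.dist_getVert hp hmin.2).1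
    rw [← hj] at this
    rw [dist_self] at this
    omega
  · rw [Walk.length_copy, Walk.length_dropW, Walk.length_takeW]; omega

/-- A geodesic between two points far from `x` avoids `x`. -/
lemma connector {x a u : V} (h : G.Reachable a u) (hd : G.dist a u < G.dist x a) :
    ∃ W : G.Walk a u, x ∉ W.support ∧ W.length = G.dist a u := by
  obtain ⟨W, hW⟩ := h.exists_walk_length_eq_dist
  refine ⟨W, fun hx => ?_, hW⟩
  have h1 : G.dist a x ≤ W.length := Walk.dist_start_le hx
  rw [hW, dist_comm (u := a) (v := x)] at h1
  omega

/-- Core step: a point at controlled distance along a geodesic `p` from `x` can be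
joined, avoiding `x`, to a point satisfying `P` (or to the far endpoint `y`). -/
lemma stepSide {x y : V} {δ : ℕ} (hδ : 0 < δ) (p : G.Walk x y)
    (hp : p.length = G.dist x y) (hpn : 0 < p.length) (P : V → Prop)
    (hreach : ∀ u, P u → G.Reachable x u)
    (hthin : ∀ w ∈ p.support, ∃ u, P u ∧ G.dist w u ≤ δ) :
    ∃ (w0 : V) (W : G.Walk (p.getVert 1) w0), x ∉ W.support ∧ W.length ≤ 3*δ ∧
      G.dist x w0 ≤ 3*δ+1 ∧ 1 ≤ G.dist x w0 ∧ (w0 = y ∨ P w0) := by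
  by_cases hshort : p.length ≤ 2*δ+1
  · obtain ⟨W, hWx, hWl⟩ := seg₁ p hp hpn le_rfl
    refine ⟨y, W.copy rfl p.getVert_length, by simpa [Walk.support_copy] using hWx, ?_, ?_, ?_,
      Or.inl rfl⟩
    · rw [Walk.length_copy, hWl]; omega
    · rw [← hp]; omega
    · rw [← hp]; omega
  · set t := 2*δ+1 with htdef
    have htle : t ≤ p.length := by omega
    have ha : p.getVert t ∈ p.support :=
      Walk.mem_support_iff_exists_getVert.mpr ⟨t, rfl, htle⟩
    obtain ⟨u, hu, hdu⟩ := hthin (p.getVert t) ha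
    have hxa : G.dist x (p.getVert t) = t := (p.dist_getVert hp htle).1
    have hrxa : G.Reachable x (p.getVert t) := reachable_of_mem_support ha
    have hrau : G.Reachable (p.getVert t) u := hrxa.symm.trans (hreach u hu)
    obtain ⟨Wc, hWcx, hWcl⟩ := connector (x := x) hrau (by omega)
    obtain ⟨W1, hW1x, hW1l⟩ := seg₁ p hp (by omega) htle
    have hxu1 : G.dist x (p.getVert t) ≤ G.dist x u + G.dist u (p.getVert t) :=
      dist_triangle' (hrxa.trans hrau) hrau.symm
    have hxu2 : G.dist x u ≤ G.dist x (p.getVert t) + G.dist (p.getVert t) u :=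
      dist_triangle' hrxa hrau
    rw [dist_comm (u := u) (v := p.getVert t)] at hxu1
    refine ⟨u, W1.append Wc, ?_, ?_, by omega, by omega, Or.inr hu⟩
    · rw [Walk.mem_support_append_iff]; tauto
    · rw [Walk.length_append]; omega

end SimpleGraph

namespace SimpleGraph
variable {V : Type*} {G : SimpleGraph V}

/-- From a point distance 1 along a geodesic `p`, reach a point of `r`, avoiding `x`,
in ≤ 3δ steps; provided walks from the start vertex to `q`'s and `r`'s second-vertex
are long (angle condition). -/
lemma sideToR {x y z : V} {δ : ℕ} (hδ : 0 < δ) (p : G.Walk x y) (q : G.Walk x z)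
    (hp : p.length = G.dist x y) (hq : q.length = G.dist x z)
    (hpn : 0 < p.length) (hqn : 0 < q.length)
    (hangN : ∀ W : G.Walk (p.getVert 1) (q.getVert 1), x ∉ W.support → 50*δ ≤ W.length)
    (r : G.Walk y z)
    (hthin : ∀ w ∈ p.support, ∃ u, (u ∈ q.support ∨ u ∈ r.support) ∧ G.dist w u ≤ δ) :
    ∃ j, j ≤ r.length ∧ ∃ W : G.Walk (p.getVert 1) (r.getVert j),
      x ∉ W.support ∧ W.length ≤ 3*δ ∧ G.dist x (r.getVert j) ≤ 3*δ+1 := by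
  obtain ⟨w0, W, hWx, hWl, hd1, hd2, hP⟩ := stepSide hδ p hp hpn
    (fun u => u ∈ q.support ∨ u ∈ r.support)
    (fun u hu => hu.elim (fun h => reachable_of_mem_support h)
      (fun h => p.reachable.trans (reachable_of_mem_support h)))
    hthin
  rcases hP with rfl | hu | hu
  · refine ⟨0, by omega, W.copy rfl r.getVert_zero.symm, ?_, by simpa [Walk.length_copy] using hWl, ?_⟩
    · simpa [Walk.support_copy] using hWx
    · rwa [r.getVert_zero]
  · -- w0 on q: contradiction with the angle condition
    exfalso
    obtain ⟨n, hn, hnle⟩ := Walk.mem_support_iff_exists_getVert.mp hu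
    have hdn : G.dist x (q.getVert n) = n := (q.dist_getVert hq hnle).1
    rw [hn] at hdn
    obtain ⟨Wq, hWqx, hWql⟩ := seg₁ q hq (t := n) (by omega) hnle
    have hT : x ∉ (W.append ((Wq.reverse).copy hn rfl)).support := by
      rw [Walk.mem_support_append_iff]
      push_neg
      refine ⟨hWx, ?_⟩
      rw [Walk.support_copy, Walk.support_reverse, List.mem_reverse]
      exact hWqx
    have := hangN (W.append ((Wq.reverse).copy hn rfl)) hT
    rw [Walk.length_append, Walk.length_copy, Walk.length_reverse] at this
    omega
  · obtain ⟨n, hn, hnle⟩ := Walk.mem_support_iff_exists_getVert.mp hu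
    exact ⟨n, hnle, W.copy rfl hn.symm, by simpa [Walk.support_copy] using hWx, by simpa [Walk.length_copy] using hWl,
      by rwa [hn]⟩

/-- A subsegment of a geodesic `r` avoiding `x`, between two points close to `x`,
is short and avoids `x`. -/
lemma midR {x y z : V} {δ : ℕ} (r : G.Walk y z) (hr : r.length = G.dist y z)
    (hxr : x ∉ r.support) {j j' : ℕ} (hjj : j ≤ j') (hj' : j' ≤ r.length)
    (hdj : G.dist x (r.getVert j) ≤ 3*δ+1) (hdj' : G.dist x (r.getVert j') ≤ 3*δ+1)
    (hrxy : G.Reachable x y) :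
    ∃ M : G.Walk (r.getVert j) (r.getVert j'), x ∉ M.support ∧ M.length ≤ 6*δ+2 := by
  have hry : G.Reachable y (r.getVert j) := (r.takeW j).reachable
  have hry' : G.Reachable y (r.getVert j') := (r.takeW j').reachable
  have hrjj : G.Reachable (r.getVert j) (r.getVert j') := hry.symm.trans hry'
  have h1 : G.dist y (r.getVert j) = j := (r.dist_getVert hr (by omega)).1
  have h2 : G.dist y (r.getVert j') = j' := (r.dist_getVert hr hj').1
  have h3 : G.dist y (r.getVert j') ≤ G.dist y (r.getVert j) + G.dist (r.getVert j) (r.getVert j') :=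
    dist_triangle' hry hrjj
  have h4 : G.dist (r.getVert j) (r.getVert j') ≤
      G.dist (r.getVert j) x + G.dist x (r.getVert j') :=
    dist_triangle' (hrxy.trans hry).symm (hrxy.trans hry')
  rw [dist_comm (u := r.getVert j) (v := x)] at h4
  have hlen : j' - j ≤ 6*δ+2 := by omega
  have hjeq : (r.takeW j').getVert j = r.getVert j := by
    rw [Walk.getVert_takeW]; congr 1; omega
  refine ⟨((r.takeW j').dropW j).copy hjeq rfl, ?_, ?_⟩
  · intro hx
    rw [Walk.support_copy] at hx
    obtain ⟨m, hm1, hm⟩ := Walk.mem_support_dropW hx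
    rw [Walk.getVert_takeW] at hm
    exact hxr (hm ▸ Walk.mem_support_iff_exists_getVert.mpr ⟨min m j', rfl, by omega⟩)
  · rw [Walk.length_copy, Walk.length_dropW, Walk.length_takeW]; omega

/-- Every geodesic from `y` to `z` passes through `x`. -/
lemma claimA {x y z : V} {δ : ℕ} (hδ : 0 < δ) (hhyp : HypGraph G δ)
    (p : G.Walk x y) (q : G.Walk x z)
    (hp : p.length = G.dist x y) (hq : q.length = G.dist x z)
    (hpn : 0 < p.length) (hqn : 0 < q.length)
    (hangN : ∀ W : G.Walk (p.getVert 1) (q.getVert 1), x ∉ W.support → 50*δ ≤ W.length)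
    (r : G.Walk y z) (hr : r.length = G.dist y z) : x ∈ r.support := by
  by_contra hxr
  have hangN' : ∀ W : G.Walk (q.getVert 1) (p.getVert 1), x ∉ W.support → 50*δ ≤ W.length := by
    intro W hW
    have hx : x ∉ W.reverse.support := by
      rw [Walk.support_reverse, List.mem_reverse]; exact hW
    have := hangN W.reverse hx
    rwa [Walk.length_reverse] at this
  have hthinp : ∀ w ∈ p.support, ∃ u, (u ∈ q.support ∨ u ∈ r.support) ∧ G.dist w u ≤ δ := by
    intro w hw
    obtain ⟨u, hu, hd⟩ := hhyp q r.reverse p hq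
      (by rw [Walk.length_reverse, hr]; exact dist_comm) hp w hw
    refine ⟨u, ?_, hd⟩
    rcases hu with h | h
    · exact Or.inl h
    · rw [Walk.support_reverse, List.mem_reverse] at h; exact Or.inr h
  have hthinq : ∀ w ∈ q.support, ∃ u, (u ∈ p.support ∨ u ∈ r.support) ∧ G.dist w u ≤ δ :=
    fun w hw => hhyp p r q hp hr hq w hw
  obtain ⟨j, hj, Wp, hWpx, hWpl, hdj⟩ := sideToR hδ p q hp hq hpn hqn hangN r hthinp
  have hrzy : (r.reverse).length = G.dist z y := by
    rw [Walk.length_reverse, hr]; exact dist_comm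
  obtain ⟨j', hj', Wq, hWqx, hWql, hdj'⟩ := sideToR hδ q p hq hp hqn hpn hangN' r.reverse
    (by
      intro w hw
      obtain ⟨u, hu, hd⟩ := hthinq w hw
      refine ⟨u, ?_, hd⟩
      rcases hu with h | h
      · exact Or.inl h
      · exact Or.inr (by rw [Walk.support_reverse, List.mem_reverse]; exact h))
  -- translate j' on r.reverse to an index on r
  set k := r.length - j' with hkdef
  have hkle : k ≤ r.length := by omega
  have hgv : r.reverse.getVert j' = r.getVert k := by
    rw [Walk.getVert_reverse]
  rw [hgv] at hdj'
  set Wq' := Wq.copy rfl hgv with hWq'def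
  have hWq'x : x ∉ Wq'.support := by simpa [hWq'def, Walk.support_copy] using hWqx
  have hWq'l : Wq'.length ≤ 3*δ := by simpa [hWq'def, Walk.length_copy] using hWql
  rcases le_total j k with h | h
  · obtain ⟨M, hMx, hMl⟩ := midR r hr hxr h hkle hdj hdj' p.reachable
    have hT : x ∉ (Wp.append (M.append Wq'.reverse)).support := by
      rw [Walk.mem_support_append_iff, Walk.mem_support_append_iff]
      push_neg
      exact ⟨hWpx, hMx, by rw [Walk.support_reverse, List.mem_reverse]; exact hWq'x⟩
    have := hangN (Wp.append (M.append Wq'.reverse)) hT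
    rw [Walk.length_append, Walk.length_append, Walk.length_reverse] at this
    omega
  · obtain ⟨M, hMx, hMl⟩ := midR r hr hxr h hj hdj' hdj p.reachable
    have hT : x ∉ (Wq'.append (M.append Wp.reverse)).support := by
      rw [Walk.mem_support_append_iff, Walk.mem_support_append_iff]
      push_neg
      exact ⟨hWq'x, hMx, by rw [Walk.support_reverse, List.mem_reverse]; exact hWpx⟩
    have := hangN' (Wq'.append (M.append Wp.reverse)) hT
    rw [Walk.length_append, Walk.length_append, Walk.length_reverse] at this
    omega

end SimpleGraph

namespace SimpleGraph

variable {V : Type*} {G : SimpleGraph V}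

/-- Two geodesics with the same endpoints have nearby second vertices:
there is a short walk between them avoiding the common start vertex. -/
lemma near_start {x y : V} {δ : ℕ} (hδ : 0 < δ) (hhyp : HypGraph G δ)
    (p p' : G.Walk x y) (hp : p.length = G.dist x y) (hp' : p'.length = G.dist x y)
    (hpn : 0 < p.length) :
    ∃ W : G.Walk (p'.getVert 1) (p.getVert 1), x ∉ W.support ∧ W.length ≤ 6*δ := by
  have hpn' : 0 < p'.length := by rw [hp', ← hp]; exact hpn
  have hthin : ∀ w ∈ p'.support, ∃ u, u ∈ p.support ∧ G.dist w u ≤ δ := by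
    intro w hw
    obtain ⟨u, hu, hd⟩ := hhyp p (Walk.nil : G.Walk y y) p' hp (by simp [SimpleGraph.dist_self]) hp' w hw
    refine ⟨u, ?_, hd⟩
    rcases hu with h | h
    · exact h
    · simp only [Walk.support_nil, List.mem_singleton] at h
      exact h ▸ p.end_mem_support
  obtain ⟨w0, W, hWx, hWl, hd1, hd2, hP⟩ := stepSide hδ p' hp' hpn' (· ∈ p.support)
    (fun u hu => reachable_of_mem_support hu) hthin
  have hw0p : w0 ∈ p.support := by
    rcases hP with rfl | h
    · exact p.end_mem_support
    · exact h
  obtain ⟨n, hn, hnle⟩ := Walk.mem_support_iff_exists_getVert.mp hw0p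
  have hdn : G.dist x (p.getVert n) = n := (p.dist_getVert hp hnle).1
  rw [hn] at hdn
  obtain ⟨W2, hW2x, hW2l⟩ := seg₁ p hp (t := n) (by omega) hnle
  refine ⟨W.append ((W2.reverse).copy hn rfl), ?_, ?_⟩
  · rw [Walk.mem_support_append_iff]
    push_neg
    refine ⟨hWx, ?_⟩
    rw [Walk.support_copy, Walk.support_reverse, List.mem_reverse]
    exact hW2x
  · rw [Walk.length_append, Walk.length_copy, Walk.length_reverse]
    omega

lemma ang_le_walk {x v1 v2 : V} (W : G.Walk v1 v2) (hW : x ∉ W.support) :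
    ang G x v1 v2 ≤ (W.length : ℕ∞) := by
  exact iInf₂_le W hW

end SimpleGraph


open SimpleGraph

/-- Large angles in triangles: if two geodesics `[x,y]`, `[x,z]` make an angle at least
`50δ` at `x`, then their concatenation is a geodesic, every geodesic `[y,z]` passes
through `x`, and its angle at `x` is at least the original angle minus `50δ`. -/
theorem stmt6 {V : Type*} (G : SimpleGraph V) (δ : ℕ) (hδ : 0 < δ)
    (hhyp : HypGraph G δ) {x y z : V} (p : G.Walk x y) (q : G.Walk x z)
    (hp : p.length = G.dist x y) (hq : q.length = G.dist x z)
    (hpn : 0 < p.length) (hqn : 0 < q.length)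
    (hang : ((50 * δ : ℕ) : ℕ∞) ≤ ang G x (p.getVert 1) (q.getVert 1)) :
    (p.reverse.append q).length = G.dist y z ∧
    ∀ r : G.Walk y z, r.length = G.dist y z →
      x ∈ r.support ∧
      ∀ i, 0 < i → i < r.length → r.getVert i = x →
        ang G x (p.getVert 1) (q.getVert 1) - ((50 * δ : ℕ) : ℕ∞) ≤
          ang G x (r.getVert (i - 1)) (r.getVert (i + 1)) := by
  classical
  have hangN : ∀ W : G.Walk (p.getVert 1) (q.getVert 1), x ∉ W.support → 50*δ ≤ W.length := by
    intro W hW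
    have := hang.trans (ang_le_walk W hW)
    exact_mod_cast this
  have hkey : ∀ r : G.Walk y z, r.length = G.dist y z → x ∈ r.support :=
    fun r hr => claimA hδ hhyp p q hp hq hpn hqn hangN r hr
  have hryz : G.Reachable y z := p.reachable.symm.trans q.reachable
  obtain ⟨r0, hr0⟩ := hryz.exists_walk_length_eq_dist
  have hx0 : x ∈ r0.support := hkey r0 hr0
  have hsum : G.dist y z = p.length + q.length := by
    have hle : G.dist y z ≤ p.length + q.length := by
      have := dist_le (p.reverse.append q)
      rwa [Walk.length_append, Walk.length_reverse] at this
    have hge : p.length + q.length ≤ G.dist y z := by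
      have hsplit : (r0.takeUntil x hx0).length + (r0.dropUntil x hx0).length = r0.length := by
        rw [← Walk.length_append, r0.take_spec hx0]
      have h1 : G.dist y x ≤ (r0.takeUntil x hx0).length := dist_le _
      have h2 : G.dist x z ≤ (r0.dropUntil x hx0).length := dist_le _
      rw [dist_comm (u := y) (v := x), ← hp] at h1
      rw [← hq] at h2
      omega
    omega
  have hconc : (p.reverse.append q).length = G.dist y z := by
    rw [Walk.length_append, Walk.length_reverse, hsum]
  refine ⟨hconc, fun r hr => ⟨hkey r hr, ?_⟩⟩
  intro i hi0 hil hix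
  -- r splits at x into two geodesics
  have hile : i ≤ r.length := hil.le
  have hd1 : G.dist y (r.getVert i) = i := (r.dist_getVert hr hile).1
  have hd2 : G.dist (r.getVert i) z = r.length - i := (r.dist_getVert hr hile).2
  rw [hix] at hd1 hd2
  -- first half, reversed: a geodesic from x to y
  have hr1len : (r.takeW i).length = i := by rw [Walk.length_takeW]; omega
  have r1 : G.Walk x y := (((r.takeW i).copy rfl hix).reverse)
  have hr1 : (((r.takeW i).copy rfl hix).reverse).length = G.dist x y := by
    rw [Walk.length_reverse, Walk.length_copy, hr1len, dist_comm (u := x) (v := y), ← hd1]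
  -- second half: a geodesic from x to z
  have hr2 : ((r.dropW i).copy hix rfl).length = G.dist x z := by
    rw [Walk.length_copy, Walk.length_dropW, ← hd2]
  obtain ⟨W1, hW1x, hW1l⟩ := near_start hδ hhyp p ((r.takeW i).copy rfl hix).reverse hp hr1 hpn
  obtain ⟨W2, hW2x, hW2l⟩ := near_start hδ hhyp q ((r.dropW i).copy hix rfl) hq hr2 hqn
  have hgv1 : (((r.takeW i).copy rfl hix).reverse).getVert 1 = r.getVert (i-1) := by
    rw [Walk.getVert_reverse, Walk.length_copy, hr1len, Walk.getVert_copy, Walk.getVert_takeW]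
    congr 1; omega
  have hgv2 : (((r.dropW i).copy hix rfl)).getVert 1 = r.getVert (i+1) := by
    rw [Walk.getVert_copy, Walk.getVert_dropW]
  -- now bound the angle
  refine le_iInf fun w => le_iInf fun hw => ?_
  rw [tsub_le_iff_right]
  have W1' : G.Walk (r.getVert (i-1)) (p.getVert 1) := W1.copy hgv1 rfl
  have T : G.Walk (p.getVert 1) (q.getVert 1) :=
    (W1.copy hgv1 rfl).reverse.append (w.append ((W2.copy hgv2 rfl).reverse.reverse))
  have hT : x ∉ ((W1.copy hgv1 rfl).reverse.append
      (w.append (W2.copy hgv2 rfl))).support := by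
    rw [Walk.mem_support_append_iff, Walk.mem_support_append_iff]
    push_neg
    refine ⟨?_, hw, ?_⟩
    · rw [Walk.support_reverse, List.mem_reverse, Walk.support_copy]; exact hW1x
    · rw [Walk.support_copy]; exact hW2x
  have hTlen : ((W1.copy hgv1 rfl).reverse.append
      (w.append (W2.copy hgv2 rfl))).length ≤ w.length + 50*δ := by
    rw [Walk.length_append, Walk.length_append, Walk.length_reverse, Walk.length_copy,
      Walk.length_copy]
    omega
  calc ang G x (p.getVert 1) (q.getVert 1)
      ≤ (((W1.copy hgv1 rfl).reverse.append (w.append (W2.copy hgv2 rfl))).length : ℕ∞) :=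
        ang_le_walk _ hT
    _ ≤ ((w.length + 50*δ : ℕ) : ℕ∞) := by exact_mod_cast hTlen
    _ = (w.length : ℕ∞) + ((50 * δ : ℕ) : ℕ∞) := by push_cast; ring
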